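/- In the dimensionally regularized setting, if S_{ρ*} = S_τ + θ_τ ρ* with ρ* an odd constant of ghost number -1 satisfying (ρ*)² = 0, and θ_τ = (1/(2τ))(S_τ,S_τ) + (1/τ)Δ_c S_τ, then (1/2)(S_{ρ*},S_{ρ*}) + Δ_c S_{ρ*} = τ ∂^R S_{ρ*}/∂ρ*, using only (ρ*)² = 0, nilpotency Δ_c² = 0, and the derivation property of Δ_c. -/

import Mathlib

/-- With S_{ρ*} = S_τ + θ_τ ρ*, ρ* odd of ghost number -1 with
(ρ*)² = 0, and θ_τ = (1/(2τ))(S_τ,S_τ) + (1/τ)Δ_c S_τ, one has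
(1/2)(S_{ρ*},S_{ρ*}) + Δ_c S_{ρ*} = τ ∂^R S_{ρ*}/∂ρ*, using only (ρ*)² = 0,
Δ_c² = 0 and the derivation property of Δ_c.  A functional a + b ρ* is
modelled by the pair (a,b), with the induced bracket `Br`, induced operator
`Δc2`, and right ρ*-derivative `dρ`. -/
theorem rho_star_extended_master_equation
    {A : Type*} [AddCommGroup A] [Module ℚ A]
    (br : A →ₗ[ℚ] A →ₗ[ℚ] A) (deg : A → ℤ)
    (hanti : ∀ X Y : A,
      br X Y = -(((-1 : ℚ) ^ ((deg X + 1) * (deg Y + 1))) • br Y X))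
    (hjac : ∀ X Y Z : A,
      ((-1 : ℚ) ^ ((deg X + 1) * (deg Z + 1))) • br X (br Y Z)
        + ((-1 : ℚ) ^ ((deg Y + 1) * (deg X + 1))) • br Y (br Z X)
        + ((-1 : ℚ) ^ ((deg Z + 1) * (deg Y + 1))) • br Z (br X Y) = 0)
    (Δc : A →ₗ[ℚ] A)
    (hΔnil : ∀ X : A, Δc (Δc X) = 0)
    (hder : ∀ X Y : A,
      Δc (br X Y) = br (Δc X) Y + ((-1 : ℚ) ^ (deg X + 1)) • br X (Δc Y))
    (τ : ℚ) (hτ : τ ≠ 0)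
    (Sτ : A) (hdegS : deg Sτ = 0)
    -- the pair (a,b) represents a + b ρ*; bracket, Δ_c and ∂^R/∂ρ* on pairs:
    (Br : A × A → A × A → A × A)
    (hBr : ∀ a b c d : A,
      Br (a, b) (c, d) = (br a c, br b c + ((-1 : ℚ) ^ (deg a + 1)) • br a d))
    (Δc2 : A × A → A × A)
    (hΔc2 : ∀ a b : A, Δc2 (a, b) = (Δc a, -(Δc b)))
    (dρ : A × A → A × A)
    (hdρ : ∀ a b : A, dρ (a, b) = (b, 0))
    (θτ : A)
    (hθ : θτ = (1 / (2 * τ) : ℚ) • br Sτ Sτ + (1 / τ : ℚ) • Δc Sτ) :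
    (1/2 : ℚ) • Br (Sτ, θτ) (Sτ, θτ) + Δc2 (Sτ, θτ) = τ • dρ (Sτ, θτ) := by

  have hB0 : br Sτ (br Sτ Sτ) = 0 := by
    have := hjac Sτ Sτ Sτ
    rw [hdegS] at this
    norm_num at this
    have h3 : (3:ℚ) • br Sτ (br Sτ Sτ) = 0 := by
      rw [show (3:ℚ) • br Sτ (br Sτ Sτ)
          = -(-(br Sτ (br Sτ Sτ)) + -(br Sτ (br Sτ Sτ)) + -(br Sτ (br Sτ Sτ))) from by module,
        this, neg_zero]
    rcases smul_eq_zero.mp h3 with h | h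
    · norm_num at h
    · exact h
  have hB0' : br (br Sτ Sτ) Sτ = 0 := by
    rw [hanti (br Sτ Sτ) Sτ, hB0, smul_zero, neg_zero]
  have hDS : Δc θτ = (1 / (2 * τ) : ℚ) • (br (Δc Sτ) Sτ - br Sτ (Δc Sτ)) := by
    rw [hθ, map_add, map_smul, map_smul, hΔnil, smul_zero, add_zero,
      hder Sτ Sτ, hdegS]
    norm_num
    module
  rw [hBr, hΔc2, hdρ, hdegS]
  have e1 : br θτ Sτ = (1 / (2 * τ) : ℚ) • br (br Sτ Sτ) Sτ
      + (1 / τ : ℚ) • br (Δc Sτ) Sτ := by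
    rw [hθ]; simp
  have e2 : br Sτ θτ = (1 / (2 * τ) : ℚ) • br Sτ (br Sτ Sτ)
      + (1 / τ : ℚ) • br Sτ (Δc Sτ) := by
    rw [hθ]; simp
  have hτθ : τ • θτ = (1/2 : ℚ) • br Sτ Sτ + Δc Sτ := by
    rw [hθ, smul_add, smul_smul, smul_smul]
    rw [show τ * (1 / (2 * τ)) = 1/2 by field_simp, show τ * (1/τ) = 1 by field_simp,
      one_smul]
  ext
  · show (1/2 : ℚ) • br Sτ Sτ + Δc Sτ = τ • θτ
    rw [hτθ]
  · show (1/2 : ℚ) • (br θτ Sτ + ((-1:ℚ)^((0:ℤ)+1)) • br Sτ θτ) + -(Δc θτ) = τ • (0:A)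
    rw [e1, e2, hDS, hB0, hB0']
    norm_num
    module
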